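/- Let R be a commutative ring and t, u be standard ring terms over R with the same carrier, S[t] = S[u]. Then t and u are f-equivalent. -/
import Mathlib


/-- Ring terms over a commutative ring `R`. -/
inductive RingTerm (R : Type*) where
  | X : ℕ → RingTerm R
  | C : R → RingTerm R
  | zero : RingTerm R
  | one : RingTerm R
  | add : RingTerm R → RingTerm R → RingTerm R
  | mul : RingTerm R → RingTerm R → RingTerm R

namespace RingTerm

variable {R : Type*} [CommRing R]

/-- The evaluation map `Ψ` into multivariate polynomials. -/
noncomputable def psi : RingTerm R → MvPolynomial ℕ R
  | X i => MvPolynomial.X i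
  | C r => MvPolynomial.C r
  | zero => 0
  | one => 1
  | add t u => psi t + psi u
  | mul t u => psi t * psi u

/-- One-step elementary transformation: the twelve rules ET−1 … ET10,
closed under the term-forming operations (compatible closure). -/
inductive Step : RingTerm R → RingTerm R → Prop where
  | etm1 : Step zero (C 0)
  | et0 : Step one (C 1)
  | et1 (r s : R) : Step (add (C r) (C s)) (C (r + s))
  | et2 (r s : R) : Step (mul (C r) (C s)) (C (r * s))
  | et3 (u : RingTerm R) : Step (add zero u) u
  | et4 (u : RingTerm R) : Step (mul one u) u
  | et5 (u u' : RingTerm R) : Step (add u u') (add u' u)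
  | et6 (u u' : RingTerm R) : Step (mul u u') (mul u' u)
  | et7 (u u' u'' : RingTerm R) : Step (add u (add u' u'')) (add (add u u') u'')
  | et8 (u u' u'' : RingTerm R) : Step (mul u (mul u' u'')) (mul (mul u u') u'')
  | et9 (u u' u'' : RingTerm R) :
      Step (mul u (add u' u'')) (add (mul u u') (mul u u''))
  | et10 (u : RingTerm R) : Step (mul zero u) zero
  | addLeft {t t' : RingTerm R} (u : RingTerm R) :
      Step t t' → Step (add t u) (add t' u)
  | addRight (u : RingTerm R) {t t' : RingTerm R} :
      Step t t' → Step (add u t) (add u t')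
  | mulLeft {t t' : RingTerm R} (u : RingTerm R) :
      Step t t' → Step (mul t u) (mul t' u)
  | mulRight (u : RingTerm R) {t t' : RingTerm R} :
      Step t t' → Step (mul u t) (mul u t')

/-- f-equivalence: the equivalence closure of the one-step transformation. -/
def FEq (t u : RingTerm R) : Prop := Relation.EqvGen Step t u

end RingTerm

namespace RingTerm

variable {R : Type*}

/-- The number of occurrences of the variable `X i` in a term. -/
def varCount : RingTerm R → ℕ → ℕ
  | X j, i => if j = i then 1 else 0
  | C _, _ => 0
  | zero, _ => 0
  | one, _ => 0
  | add t u, i => varCount t i + varCount u i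
  | mul t u, i => varCount t i + varCount u i

/-- A term built only from variables and the binary symbol `·`. -/
def MulOnly : RingTerm R → Prop
  | X _ => True
  | mul t u => MulOnly t ∧ MulOnly u
  | _ => False

/-- An `m̄`-monomial: a term built only from variables and `·` in which each
variable `X i` occurs exactly `m̄ i` times; for `m̄ = 0` it is the term `1`. -/
def IsMonomial (m : ℕ →₀ ℕ) (t : RingTerm R) : Prop :=
  (m = 0 ∧ t = one) ∨ (MulOnly t ∧ ∀ i, varCount t i = m i)

/-- Nonempty iterated sums: `IsSumOfPos l s` holds iff `s` is obtained from a
term built only from variables (each occurring exactly once) and `+` by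
substituting the terms of the multiset `l` for the variables. -/
inductive IsSumOfPos : Multiset (RingTerm R) → RingTerm R → Prop where
  | single (t : RingTerm R) : IsSumOfPos {t} t
  | add {l l' : Multiset (RingTerm R)} {s s' : RingTerm R} :
      IsSumOfPos l s → IsSumOfPos l' s' → IsSumOfPos (l + l') (add s s')

/-- `s` is a sum of the terms in the multiset `l`; for `l = 0` the unique sum
is the term `0`. -/
def IsSumOf (l : Multiset (RingTerm R)) (s : RingTerm R) : Prop :=
  (l = 0 ∧ s = zero) ∨ IsSumOfPos l s

end RingTerm

namespace RingTerm

/-- `t` is a standard ring term with carrier `p`: `t` is a sum of terms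
`C (r i) · μ i`, `i = 1, …, N`, where the `r i` are nonzero and the `μ i` are
`m̄ i`-monomials with pairwise distinct exponent vectors, and
`p = Σ_i monomial (m̄ i) (r i)`. -/
noncomputable def IsStandardWithCarrier {R : Type*} [CommRing R]
    (t : RingTerm R) (p : MvPolynomial ℕ R) : Prop :=
  ∃ (N : ℕ) (r : Fin N → R) (m : Fin N → (ℕ →₀ ℕ)) (μ : Fin N → RingTerm R),
    (∀ i, r i ≠ 0) ∧ Function.Injective m ∧
    (∀ i, IsMonomial (m i) (μ i)) ∧
    IsSumOf (Multiset.map (fun i => mul (C (r i)) (μ i)) Finset.univ.val) t ∧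
    p = ∑ i : Fin N, MvPolynomial.monomial (m i) (r i)

end RingTerm

namespace RingTerm

variable {R : Type*} [CommRing R]

theorem feq_refl (t : RingTerm R) : FEq t t := Relation.EqvGen.refl t

theorem feq_symm {t u : RingTerm R} (h : FEq t u) : FEq u t :=
  Relation.EqvGen.symm _ _ h

theorem feq_trans {t u v : RingTerm R} (h : FEq t u) (h' : FEq u v) : FEq t v :=
  Relation.EqvGen.trans _ _ _ h h'

theorem feq_of_step {t u : RingTerm R} (h : Step t u) : FEq t u :=
  Relation.EqvGen.rel _ _ h

theorem feq_addLeft {t t' : RingTerm R} (u : RingTerm R) (h : FEq t t') :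
    FEq (add t u) (add t' u) := by
  induction h with
  | rel a b h => exact feq_of_step (.addLeft u h)
  | refl a => exact feq_refl _
  | symm a b _ ih => exact feq_symm ih
  | trans a b c _ _ ih1 ih2 => exact feq_trans ih1 ih2

theorem feq_addRight {t t' : RingTerm R} (u : RingTerm R) (h : FEq t t') :
    FEq (add u t) (add u t') := by
  induction h with
  | rel a b h => exact feq_of_step (.addRight u h)
  | refl a => exact feq_refl _
  | symm a b _ ih => exact feq_symm ih
  | trans a b c _ _ ih1 ih2 => exact feq_trans ih1 ih2

theorem feq_mulLeft {t t' : RingTerm R} (u : RingTerm R) (h : FEq t t') :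
    FEq (mul t u) (mul t' u) := by
  induction h with
  | rel a b h => exact feq_of_step (.mulLeft u h)
  | refl a => exact feq_refl _
  | symm a b _ ih => exact feq_symm ih
  | trans a b c _ _ ih1 ih2 => exact feq_trans ih1 ih2

theorem feq_mulRight {t t' : RingTerm R} (u : RingTerm R) (h : FEq t t') :
    FEq (mul u t) (mul u t') := by
  induction h with
  | rel a b h => exact feq_of_step (.mulRight u h)
  | refl a => exact feq_refl _
  | symm a b _ ih => exact feq_symm ih
  | trans a b c _ _ ih1 ih2 => exact feq_trans ih1 ih2

theorem feq_add_congr {a a' b b' : RingTerm R} (h : FEq a a') (h' : FEq b b') :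
    FEq (add a b) (add a' b') :=
  feq_trans (feq_addLeft b h) (feq_addRight a' h')

theorem feq_mul_congr {a a' b b' : RingTerm R} (h : FEq a a') (h' : FEq b b') :
    FEq (mul a b) (mul a' b') :=
  feq_trans (feq_mulLeft b h) (feq_mulRight a' h')

/-- Canonical right-nested sum of a list of terms. -/
def sumL : List (RingTerm R) → RingTerm R
  | [] => zero
  | a :: l => add a (sumL l)

/-- Canonical right-nested product of a list of terms. -/
def prodL : List (RingTerm R) → RingTerm R
  | [] => one
  | a :: l => mul a (prodL l)

theorem feq_add_zero (t : RingTerm R) : FEq (add t zero) t :=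
  feq_trans (feq_of_step (.et5 _ _)) (feq_of_step (.et3 _))

theorem feq_mul_one (t : RingTerm R) : FEq (mul t one) t :=
  feq_trans (feq_of_step (.et6 _ _)) (feq_of_step (.et4 _))

theorem sumL_perm {l l' : List (RingTerm R)} (h : l.Perm l') :
    FEq (sumL l) (sumL l') := by
  induction h with
  | nil => exact feq_refl _
  | cons a _ ih => exact feq_addRight _ ih
  | swap x y l =>
      exact feq_trans (feq_of_step (.et7 _ _ _))
        (feq_trans (feq_addLeft _ (feq_of_step (.et5 _ _)))
          (feq_symm (feq_of_step (.et7 _ _ _))))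
  | trans _ _ ih1 ih2 => exact feq_trans ih1 ih2

theorem prodL_perm {l l' : List (RingTerm R)} (h : l.Perm l') :
    FEq (prodL l) (prodL l') := by
  induction h with
  | nil => exact feq_refl _
  | cons a _ ih => exact feq_mulRight _ ih
  | swap x y l =>
      exact feq_trans (feq_of_step (.et8 _ _ _))
        (feq_trans (feq_mulLeft _ (feq_of_step (.et6 _ _)))
          (feq_symm (feq_of_step (.et8 _ _ _))))
  | trans _ _ ih1 ih2 => exact feq_trans ih1 ih2

theorem sumL_append (a b : List (RingTerm R)) :
    FEq (add (sumL a) (sumL b)) (sumL (a ++ b)) := by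
  induction a with
  | nil => exact feq_of_step (.et3 _)
  | cons x a ih =>
      exact feq_trans (feq_symm (feq_of_step (.et7 _ _ _))) (feq_addRight _ ih)

theorem prodL_append (a b : List (RingTerm R)) :
    FEq (mul (prodL a) (prodL b)) (prodL (a ++ b)) := by
  induction a with
  | nil => exact feq_of_step (.et4 _)
  | cons x a ih =>
      exact feq_trans (feq_symm (feq_of_step (.et8 _ _ _))) (feq_mulRight _ ih)

theorem isSumOfPos_feq_sumL {l : Multiset (RingTerm R)} {s : RingTerm R}
    (h : IsSumOfPos l s) : ∀ lst : List (RingTerm R), (lst : Multiset (RingTerm R)) = l →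
    FEq s (sumL lst) := by
  induction h with
  | single t =>
      intro lst hlst
      have hperm : lst.Perm [t] := Multiset.coe_eq_coe.mp (by rw [hlst]; rfl)
      exact feq_trans (feq_symm (feq_add_zero t)) (sumL_perm hperm.symm)
  | @add l l' s s' _ _ ih ih' =>
      intro lst hlst
      have h1 : ((l.toList ++ l'.toList : List (RingTerm R)) : Multiset (RingTerm R)) = l + l' := by
        rw [← Multiset.coe_add, Multiset.coe_toList, Multiset.coe_toList]
      have hperm : lst.Perm (l.toList ++ l'.toList) := by
        rw [← Multiset.coe_eq_coe, h1, hlst]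
      refine feq_trans ?_ (sumL_perm hperm.symm)
      refine feq_trans (feq_add_congr (ih l.toList (by simp)) (ih' l'.toList (by simp))) ?_
      exact sumL_append _ _

theorem rel_sumL {l l' : Multiset (RingTerm R)} (h : Multiset.Rel FEq l l') :
    ∀ lst lst' : List (RingTerm R),
      (lst : Multiset (RingTerm R)) = l → (lst' : Multiset (RingTerm R)) = l' →
      FEq (sumL lst) (sumL lst') := by
  induction h with
  | zero =>
      intro lst lst' h1 h2
      rw [Multiset.coe_eq_zero] at h1 h2
      subst h1; subst h2; exact feq_refl _
  | @cons a b as bs hab _ ih =>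
      intro lst lst' h1 h2
      have hperm : lst.Perm (a :: as.toList) :=
        Multiset.coe_eq_coe.mp (by rw [h1, ← Multiset.cons_coe, Multiset.coe_toList])
      have hperm' : lst'.Perm (b :: bs.toList) :=
        Multiset.coe_eq_coe.mp (by rw [h2, ← Multiset.cons_coe, Multiset.coe_toList])
      refine feq_trans (sumL_perm hperm) (feq_trans ?_ (sumL_perm hperm'.symm))
      exact feq_add_congr hab (ih as.toList bs.toList (by simp) (by simp))

theorem isSumOfPos_ne_zero {l : Multiset (RingTerm R)} {s : RingTerm R}
    (h : IsSumOfPos l s) : l ≠ 0 := by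
  induction h with
  | single t => simp
  | @add l l' s s' _ _ ih _ =>
      intro h0
      have h1 := congrArg Multiset.card h0
      simp only [Multiset.card_add, Multiset.card_zero] at h1
      exact ih (Multiset.card_eq_zero.mp (by omega))

theorem isSumOf_feq {l l' : Multiset (RingTerm R)} {s s' : RingTerm R}
    (h : IsSumOf l s) (h' : IsSumOf l' s') (hrel : Multiset.Rel FEq l l') :
    FEq s s' := by
  rcases h with ⟨hl, hs⟩ | h
  · subst hl
    rcases h' with ⟨hl', hs'⟩ | h'
    · rw [hs, hs']; exact feq_refl _
    · exact absurd (Multiset.rel_zero_left.mp hrel) (isSumOfPos_ne_zero h')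
  · rcases h' with ⟨hl', hs'⟩ | h'
    · subst hl'
      exact absurd rfl (isSumOfPos_ne_zero (Multiset.rel_zero_right.mp hrel ▸ h))
    · refine feq_trans (isSumOfPos_feq_sumL h l.toList (by simp)) ?_
      refine feq_trans ?_ (feq_symm (isSumOfPos_feq_sumL h' l'.toList (by simp)))
      exact rel_sumL hrel l.toList l'.toList (by simp) (by simp)

/-- The list of variable indices of a multiplication-only term. -/
def varsIdx : RingTerm R → List ℕ
  | X j => [j]
  | mul a b => varsIdx a ++ varsIdx b
  | _ => []

theorem count_varsIdx {t : RingTerm R} (h : MulOnly t) (i : ℕ) :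
    (varsIdx t).count i = varCount t i := by
  induction t with
  | X j => by_cases h : j = i <;> simp [varsIdx, varCount, h, List.count_cons, Ne.symm]
  | C r => exact h.elim
  | zero => exact h.elim
  | one => exact h.elim
  | add a b iha ihb => exact h.elim
  | mul a b iha ihb =>
      obtain ⟨ha, hb⟩ := h
      simp [varsIdx, varCount, List.count_append, iha ha, ihb hb]

theorem mulOnly_feq_prodL {t : RingTerm R} (h : MulOnly t) :
    FEq t (prodL ((varsIdx t).map X)) := by
  induction t with
  | X j => exact feq_symm (feq_mul_one _)
  | C r => exact h.elim
  | zero => exact h.elim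
  | one => exact h.elim
  | add a b iha ihb => exact h.elim
  | mul a b iha ihb =>
      obtain ⟨ha, hb⟩ := h
      refine feq_trans (feq_mul_congr (iha ha) (ihb hb)) ?_
      rw [varsIdx, List.map_append]
      exact prodL_append _ _

theorem mulOnly_exists_var {t : RingTerm R} (h : MulOnly t) :
    ∃ i, varCount t i ≠ 0 := by
  induction t with
  | X j => exact ⟨j, by simp [varCount]⟩
  | C r => exact h.elim
  | zero => exact h.elim
  | one => exact h.elim
  | add a b iha ihb => exact h.elim
  | mul a b iha ihb =>
      obtain ⟨i, hi⟩ := iha h.1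
      exact ⟨i, by simp [varCount]; omega⟩

theorem isMonomial_feq {m : ℕ →₀ ℕ} {μ μ' : RingTerm R}
    (h : IsMonomial m μ) (h' : IsMonomial m μ') : FEq μ μ' := by
  rcases h with ⟨hm, hμ⟩ | ⟨hmo, hvc⟩
  · rcases h' with ⟨_, hμ'⟩ | ⟨hmo', hvc'⟩
    · rw [hμ, hμ']; exact feq_refl _
    · obtain ⟨i, hi⟩ := mulOnly_exists_var hmo'
      exact absurd (by rw [hvc' i, hm]; simp) hi
  · rcases h' with ⟨hm, hμ'⟩ | ⟨hmo', hvc'⟩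
    · obtain ⟨i, hi⟩ := mulOnly_exists_var hmo
      exact absurd (by rw [hvc i, hm]; simp) hi
    · have hperm : (varsIdx μ).Perm (varsIdx μ') := by
        rw [List.perm_iff_count]
        intro i
        rw [count_varsIdx hmo, count_varsIdx hmo', hvc, hvc']
      refine feq_trans (mulOnly_feq_prodL hmo) ?_
      refine feq_trans (prodL_perm (hperm.map X)) ?_
      exact feq_symm (mulOnly_feq_prodL hmo')

theorem coeff_rep {N : ℕ} (r : Fin N → R) (m : Fin N → (ℕ →₀ ℕ))
    (hm : Function.Injective m) (i : Fin N) :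
    MvPolynomial.coeff (m i) (∑ j : Fin N, MvPolynomial.monomial (m j) (r j)) = r i := by
  rw [MvPolynomial.coeff_sum]
  rw [Finset.sum_eq_single i]
  · simp [MvPolynomial.coeff_monomial]
  · intro j _ hj
    rw [MvPolynomial.coeff_monomial, if_neg (fun h => hj (hm h))]
  · simp

theorem coeff_rep_zero {N : ℕ} (r : Fin N → R) (m : Fin N → (ℕ →₀ ℕ))
    (d : ℕ →₀ ℕ) (hd : ∀ j, m j ≠ d) :
    MvPolynomial.coeff d (∑ j : Fin N, MvPolynomial.monomial (m j) (r j)) = 0 := by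
  rw [MvPolynomial.coeff_sum]
  refine Finset.sum_eq_zero fun j _ => ?_
  rw [MvPolynomial.coeff_monomial, if_neg (hd j)]

end RingTerm

open RingTerm in
/-- two standard ring terms with the same carrier are
f-equivalent. -/
theorem standard_same_carrier_feq {R : Type*} [CommRing R]
    (t u : RingTerm R) (p : MvPolynomial ℕ R)
    (ht : IsStandardWithCarrier t p) (hu : IsStandardWithCarrier u p) :
    FEq t u := by
  obtain ⟨N, r, m, μ, hr, hm, hμ, hsum, hp⟩ := ht
  obtain ⟨N', r', m', μ', hr', hm', hμ', hsum', hp'⟩ := hu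
  -- for each i, there is j with matching exponent vector and coefficient
  have key : ∀ i : Fin N, ∃ j : Fin N', m' j = m i ∧ r' j = r i := by
    intro i
    have hci : MvPolynomial.coeff (m i) p = r i := by
      rw [hp]; exact coeff_rep r m hm i
    have hex : ∃ j : Fin N', m' j = m i := by
      by_contra hcon
      push_neg at hcon
      have : MvPolynomial.coeff (m i) p = 0 := by
        rw [hp']; exact coeff_rep_zero r' m' (m i) hcon
      exact hr i (by rw [← hci, this])
    obtain ⟨j, hj⟩ := hex
    refine ⟨j, hj, ?_⟩
    have : MvPolynomial.coeff (m' j) p = r' j := by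
      rw [hp']; exact coeff_rep r' m' hm' j
    rw [hj, hci] at this
    exact this.symm
  have key' : ∀ j : Fin N', ∃ i : Fin N, m i = m' j ∧ r i = r' j := by
    intro j
    have hcj : MvPolynomial.coeff (m' j) p = r' j := by
      rw [hp']; exact coeff_rep r' m' hm' j
    have hex : ∃ i : Fin N, m i = m' j := by
      by_contra hcon
      push_neg at hcon
      have : MvPolynomial.coeff (m' j) p = 0 := by
        rw [hp]; exact coeff_rep_zero r m (m' j) hcon
      exact hr' j (by rw [← hcj, this])
    obtain ⟨i, hi⟩ := hex
    refine ⟨i, hi, ?_⟩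
    have : MvPolynomial.coeff (m i) p = r i := by
      rw [hp]; exact coeff_rep r m hm i
    rw [hi, hcj] at this
    exact this.symm
  -- build the matching bijection
  set e : Fin N → Fin N' := fun i => (key i).choose with he
  have hem : ∀ i, m' (e i) = m i := fun i => (key i).choose_spec.1
  have her : ∀ i, r' (e i) = r i := fun i => (key i).choose_spec.2
  have heinj : Function.Injective e := by
    intro i1 i2 h12
    apply hm
    rw [← hem i1, ← hem i2, h12]
  set e' : Fin N' → Fin N := fun j => (key' j).choose with he'
  have hm'e : ∀ j, m (e' j) = m' j := fun j => (key' j).choose_spec.1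
  have he'inj : Function.Injective e' := by
    intro j1 j2 h12
    apply hm'
    rw [← hm'e j1, ← hm'e j2, h12]
  have hcard : N = N' := le_antisymm
    (by simpa using Fintype.card_le_of_injective e heinj)
    (by simpa using Fintype.card_le_of_injective e' he'inj)
  have hbij : Function.Bijective e :=
    (Fintype.bijective_iff_injective_and_card e).2 ⟨heinj, by simp [hcard]⟩
  -- rewrite the second multiset along the bijection
  have hmap : (Finset.univ.val.map (fun j => mul (C (r' j)) (μ' j)) : Multiset (RingTerm R))
      = Finset.univ.val.map (fun i => mul (C (r' (e i))) (μ' (e i))) := by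
    have huniv : ((Finset.univ : Finset (Fin N)).val.map e : Multiset (Fin N'))
        = (Finset.univ : Finset (Fin N')).val := by
      have := Finset.map_univ_equiv (Equiv.ofBijective e hbij)
      calc ((Finset.univ : Finset (Fin N)).val.map e : Multiset (Fin N'))
          = ((Finset.univ : Finset (Fin N)).map
              (Equiv.ofBijective e hbij).toEmbedding).val := by
            rw [Finset.map_val]; rfl
        _ = (Finset.univ : Finset (Fin N')).val := by rw [this]
    rw [← huniv, Multiset.map_map]
    rfl
  rw [hmap] at hsum'
  refine isSumOf_feq hsum hsum' ?_
  rw [Multiset.rel_map]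
  refine Multiset.rel_refl_of_refl_on fun i _ => ?_
  rw [her i]
  refine feq_mulRight _ (isMonomial_feq (hμ i) ?_)
  rw [← hem i]
  exact hμ' (e i)
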